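/- There is no coanalytic base for a Ramsey ultrafilter: if U is a free ultrafilter on ℕ that is Ramsey, then no set X ⊆ 2^ℕ which is a base for U is coanalytic. -/

import Mathlib

/-- Identify `x : ℕ → Bool` with the subset `{n | x n = true}` of `ℕ`. -/
def toSet (x : ℕ → Bool) : Set ℕ := {n | x n = true}

/-- A free ultrafilter is one containing all cofinite sets. -/
def IsFree (U : Ultrafilter ℕ) : Prop := ∀ s : Set ℕ, s.Finite → sᶜ ∈ U

/-- `X ⊆ 2^ℕ` is a base for the ultrafilter `U`. -/
def IsBase (X : Set (ℕ → Bool)) (U : Ultrafilter ℕ) : Prop :=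
  (∀ x ∈ X, toSet x ∈ U) ∧ ∀ u ∈ U, ∃ x ∈ X, toSet x ⊆ u

/-- `U` is Ramsey: every 2-coloring of pairs has a homogeneous set in `U`. -/
def IsRamsey (U : Ultrafilter ℕ) : Prop :=
  ∀ c : ℕ → ℕ → Bool, ∃ A ∈ U,
    ∀ m ∈ A, ∀ n ∈ A, ∀ m' ∈ A, ∀ n' ∈ A, m < n → m' < n' → c m n = c m' n'

namespace NCB
open Set

variable (U : Ultrafilter ℕ)

/-- members of a free ultrafilter are infinite -/
lemma mem_infinite (hfree : IsFree U) {A : Set ℕ} (hA : A ∈ U) : A.Infinite := by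
  by_contra h
  rw [Set.not_infinite] at h
  have h2 : Aᶜ ∈ U := hfree A h
  have : A ∩ Aᶜ ∈ U := Filter.inter_mem hA h2
  rw [Set.inter_compl_self] at this
  exact Filter.empty_notMem (U : Filter ℕ) this

/-- diagonalization from the Ramsey property -/
lemma diag (hfree : IsFree U) (hR : IsRamsey U) (D : ℕ → Set ℕ) (hD : ∀ m, D m ∈ U) :
    ∃ H ∈ U, ∀ m ∈ H, ∀ n ∈ H, m < n → ∀ k ≤ m, n ∈ D k := by
  classical
  set c : ℕ → ℕ → Bool := fun m n => if (∀ k ≤ m, n ∈ D k) then true else false with hc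
  obtain ⟨A, hAU, hom⟩ := hR c
  refine ⟨A, hAU, ?_⟩
  -- find one true pair
  obtain ⟨m₀, hm₀⟩ := Ultrafilter.nonempty_of_mem hAU
  have hT : A ∩ ((⋂ k ∈ Finset.Iic m₀, D k) ∩ (Set.Iic m₀)ᶜ) ∈ U := by
    refine Filter.inter_mem hAU (Filter.inter_mem ?_ (hfree _ (Set.finite_Iic m₀)))
    exact (Filter.biInter_finset_mem (Finset.Iic m₀)).2 fun k _ => hD k
  obtain ⟨n₀, hn₀A, hn₀D, hn₀gt⟩ := Ultrafilter.nonempty_of_mem hT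
  have hn₀m : m₀ < n₀ := by simpa using hn₀gt
  have hcm : c m₀ n₀ = true := by
    rw [hc]
    have h1 : ∀ k ≤ m₀, n₀ ∈ D k := fun k hk => Set.mem_iInter₂.1 hn₀D k (Finset.mem_Iic.2 hk)
    simp only [if_pos h1]
  intro m hm n hn hmn k hk
  have h2 : c m n = true := by rw [hom m hm n hn m₀ hm₀ n₀ hn₀A hmn hn₀m, hcm]
  rw [hc] at h2
  by_cases hcase : ∀ k ≤ m, n ∈ D k
  · exact hcase k hk
  · simp only [if_neg hcase] at h2
    exact absurd h2 (by simp)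


/-- `s` is an initial segment of `x`. -/
def apx (s : Finset ℕ) (x : Set ℕ) : Prop :=
  ↑s ⊆ x ∧ ∀ n ∈ x, n ∉ s → ∀ m ∈ s, m < n

/-- basic Mathias condition: `x` starts with `s` and continues inside `B`. -/
def seg (s : Finset ℕ) (B : Set ℕ) : Set (Set ℕ) :=
  {x | x.Infinite ∧ apx s x ∧ x ⊆ ↑s ∪ B}

lemma seg_mono {s : Finset ℕ} {B B' : Set ℕ} (h : B ⊆ B') : seg s B ⊆ seg s B' :=
  fun x ⟨h1, h2, h3⟩ => ⟨h1, h2, h3.trans (Set.union_subset_union_right _ h)⟩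

lemma apx_total {s s' : Finset ℕ} {x : Set ℕ} (h : apx s x) (h' : apx s' x) :
    s ⊆ s' ∨ s' ⊆ s := by
  by_cases hss : s ⊆ s'
  · exact Or.inl hss
  · right
    obtain ⟨n, hns, hns'⟩ : ∃ n, n ∈ s ∧ n ∉ s' := by
      by_contra hcon
      push_neg at hcon
      exact hss fun a ha => hcon a ha
    intro m hm
    have hmx : m ∈ x := h'.1 hm
    have hnx : (n : ℕ) ∈ x := h.1 hns
    have hmn : m < n := h'.2 n hnx hns' m hm
    by_contra hms
    have := h.2 m hmx hms n hns
    omega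

lemma seg_nonempty {s : Finset ℕ} {B : Set ℕ} (hB : B.Infinite) : (seg s B).Nonempty := by
  classical
  refine ⟨↑s ∪ {n | n ∈ B ∧ ∀ m ∈ s, m < n}, ?_, ⟨?_, ?_⟩, ?_⟩
  · have hsub : B \ Set.Iic (s.sup id) ⊆ {n | n ∈ B ∧ ∀ m ∈ s, m < n} := by
      rintro n ⟨hnB, hn⟩
      simp only [Set.mem_Iic, not_le] at hn
      exact ⟨hnB, fun m hm => lt_of_le_of_lt (Finset.le_sup (f := id) hm) hn⟩
    exact (((hB.diff (Set.finite_Iic _)).mono hsub).mono Set.subset_union_right)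
  · exact Set.subset_union_left
  · rintro n (hn | ⟨-, hn⟩) hns m hm
    · exact absurd hn hns
    · exact hn m hm
  · rintro n (hn | ⟨hn, -⟩)
    · exact Set.mem_union_left _ hn
    · exact Set.mem_union_right _ hn

lemma exists_min_diff {x : Set ℕ} (hx : x.Infinite) (s : Finset ℕ) :
    ∃ n ∈ x, n ∉ s ∧ ∀ e ∈ x, e ∉ s → n ≤ e := by
  have hne : (x \ ↑s).Nonempty := (hx.diff s.finite_toSet).nonempty
  obtain ⟨n, hn⟩ := hne
  refine ⟨sInf (x \ ↑s), ?_, ?_, ?_⟩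
  · exact (Nat.sInf_mem ⟨n, hn⟩).1
  · exact (Nat.sInf_mem (⟨n, hn⟩ : (x \ ↑s).Nonempty)).2
  · intro e he hes
    exact Nat.sInf_le ⟨he, hes⟩

/-- The key one-step shrinking lemma. -/
lemma shrink (hfree : IsFree U) (hR : IsRamsey U) (t : Finset ℕ) (S : Set ℕ) (hS : S ∈ U)
    (Bsel : ℕ → Set ℕ) (hBsel : ∀ n ∈ S, Bsel n ∈ U) :
    ∃ B ∈ U, B ⊆ S ∧ ∀ x ∈ seg t B, ∃ n ∈ S, n ∉ t ∧ x ∈ seg (insert n t) (Bsel n) := by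
  classical
  obtain ⟨Hd, hHdU, hHd⟩ := diag U hfree hR
    (fun m => if h : m ∈ S then Bsel m else Set.univ)
    (fun m => by
      by_cases h : m ∈ S
      · simpa [h] using hBsel m h
      · simp only [h, dif_neg, not_false_iff]
        exact Filter.univ_mem)
  refine ⟨Hd ∩ S, Filter.inter_mem hHdU hS, Set.inter_subset_right, ?_⟩
  rintro x ⟨hxi, hxapx, hxsub⟩
  obtain ⟨n, hnx, hnt, hnmin⟩ := exists_min_diff hxi t
  have hnB : n ∈ Hd ∩ S := by
    rcases hxsub hnx with h | h
    · exact absurd h hnt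
    · exact h
  refine ⟨n, hnB.2, hnt, ?_, ?_, ?_⟩
  · exact hxi
  · constructor
    · intro a ha
      rcases Finset.mem_insert.1 ha with rfl | ha
      · exact hnx
      · exact hxapx.1 ha
    · intro a hax hat m hm
      have hat' : a ∉ t := fun h => hat (Finset.mem_insert_of_mem h)
      have han : a ≠ n := fun h => hat (h ▸ Finset.mem_insert_self n t)
      rcases Finset.mem_insert.1 hm with rfl | hm
      · exact lt_of_le_of_ne (hnmin a hax hat') (Ne.symm han)
      · exact hxapx.2 a hax hat' m hm
  · intro a hax
    by_cases hat : a ∈ insert n t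
    · exact Set.mem_union_left _ hat
    · right
      have hat' : a ∉ t := fun h => hat (Finset.mem_insert_of_mem h)
      have han : a ≠ n := fun h => hat (h ▸ Finset.mem_insert_self n t)
      have haB : a ∈ Hd ∩ S := by
        rcases hxsub hax with h | h
        · exact absurd h hat'
        · exact h
      have hlt : n < a := lt_of_le_of_ne (hnmin a hax hat') (Ne.symm han)
      have := hHd n hnB.1 a haB.1 hlt n le_rfl
      simpa [hnB.2] using this

/-- The master fusion lemma. -/
lemma master (hfree : IsFree U) (hR : IsRamsey U) (A : Set ℕ) (hA : A ∈ U)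
    (Φ : Finset ℕ → Set ℕ) (hΦ : ∀ v, Φ v ∈ U) :
    ∃ H ∈ U, H ⊆ A ∧ ∀ v : Finset ℕ, ↑v ⊆ H → ∀ n ∈ H, (∀ m ∈ v, m < n) → n ∈ Φ v := by
  classical
  obtain ⟨H₀, hH₀U, hH₀⟩ := diag U hfree hR
    (fun m => ⋂ w ∈ (Finset.range (m + 1)).powerset, Φ w)
    (fun m => (Filter.biInter_finset_mem _).2 fun w _ => hΦ w)
  refine ⟨H₀ ∩ A ∩ Φ ∅, Filter.inter_mem (Filter.inter_mem hH₀U hA) (hΦ ∅), fun a ha => ha.1.2, ?_⟩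
  intro v hv n hn hvn
  rcases Finset.eq_empty_or_nonempty v with rfl | hvne
  · exact hn.2
  · set m := v.max' hvne with hm
    have hmv : m ∈ v := v.max'_mem hvne
    have hmH : m ∈ H₀ := (hv hmv).1.1
    have hmn : m < n := hvn m hmv
    have := hH₀ m hmH n hn.1.1 hmn m le_rfl
    have hvw : v ∈ (Finset.range (m + 1)).powerset := by
      rw [Finset.mem_powerset]
      intro a hav
      rw [Finset.mem_range]
      exact Nat.lt_succ_of_le (v.le_max' a hav)
    exact Set.mem_iInter₂.1 this v hvw

/-- combinatorially open set -/
def opn (o : Finset ℕ → Prop) : Set (Set ℕ) := {x | ∃ s, apx s x ∧ o s}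

/-- Localized Nash-Williams / Galvin dichotomy for open sets. -/
lemma open_dich (hfree : IsFree U) (hR : IsRamsey U) (o : Finset ℕ → Prop)
    (s₀ : Finset ℕ) (A : Set ℕ) (hA : A ∈ U) :
    ∃ B ∈ U, B ⊆ A ∧ (seg s₀ B ⊆ opn o ∨ ∀ x ∈ seg s₀ B, x ∉ opn o) := by
  classical
  by_cases hacc : ∃ B ∈ U, B ⊆ A ∧ seg s₀ B ⊆ opn o
  · obtain ⟨B, hB, hBA, hBo⟩ := hacc
    exact ⟨B, hB, hBA, Or.inl hBo⟩
  -- rejection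
  set Rej : Finset ℕ → Prop := fun t => ¬∃ B ∈ U, B ⊆ A ∧ seg t B ⊆ opn o with hRej
  have hRs₀ : Rej s₀ := hacc
  have step : ∀ t : Finset ℕ, Rej t → {n | Rej (insert n t)} ∈ U := by
    intro t ht
    by_contra hcon
    have hS : {n | ¬Rej (insert n t)} ∈ U := (Ultrafilter.compl_mem_iff_notMem.2 hcon)
    have hex : ∀ n, ∃ B, ¬Rej (insert n t) →
        B ∈ U ∧ B ⊆ A ∧ seg (insert n t) B ⊆ opn o := by
      intro n
      by_cases h : ¬Rej (insert n t)
      · obtain ⟨B, h1, h2, h3⟩ := not_not.1 h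
        exact ⟨B, fun _ => ⟨h1, h2, h3⟩⟩
      · exact ⟨Set.univ, fun hh => absurd hh h⟩
    choose Bsel hBsel using hex
    have hBsel1 : ∀ n ∈ {n | ¬Rej (insert n t)}, Bsel n ∈ U := fun n hn => (hBsel n hn).1
    have hBsel2 : ∀ n ∈ {n | ¬Rej (insert n t)},
        Bsel n ⊆ A ∧ seg (insert n t) (Bsel n) ⊆ opn o :=
      fun n hn => ⟨(hBsel n hn).2.1, (hBsel n hn).2.2⟩
    obtain ⟨B, hBU, hBS, hBstep⟩ := shrink U hfree hR t _ hS Bsel hBsel1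
    refine ht ⟨B ∩ A, Filter.inter_mem hBU hA, Set.inter_subset_right, ?_⟩
    intro x hx
    have hx' : x ∈ seg t B := seg_mono Set.inter_subset_left hx
    obtain ⟨n, hnS, hnt, hxn⟩ := hBstep x hx'
    exact (hBsel2 n hnS).2 hxn
  -- fusion
  obtain ⟨H, hHU, hHA, hHm⟩ := master U hfree hR A hA
    (fun v => if Rej (s₀ ∪ v) then {n | Rej (insert n (s₀ ∪ v))} else Set.univ)
    (fun v => by
      beta_reduce
      by_cases h : Rej (s₀ ∪ v)
      · rw [if_pos h]; exact step _ h
      · rw [if_neg h]; exact Filter.univ_mem)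
  have hRall : ∀ v : Finset ℕ, ↑v ⊆ H → Rej (s₀ ∪ v) := by
    intro v
    induction v using Finset.induction_on_max with
    | empty => intro _; simpa using hRs₀
    | insert a v ha ih =>
        intro hsub
        have hvH : ↑v ⊆ H := by
          intro b hb
          exact hsub (by simp [hb])
        have haH : a ∈ H := hsub (by simp)
        have := hHm v hvH a haH (fun m hm => ha m hm)
        rw [if_pos (ih hvH)] at this
        have : Rej (insert a (s₀ ∪ v)) := this
        rwa [← Finset.union_insert] at this
  refine ⟨H, hHU, hHA, Or.inr ?_⟩
  rintro x ⟨hxi, hxapx, hxsub⟩ ⟨s, hsapx, hso⟩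
  rcases apx_total hsapx hxapx with hss | hss
  · -- s ⊆ s₀ : every member of seg s₀ A is in opn o, contradicting Rej s₀
    refine hRs₀ ⟨A, hA, le_refl A, ?_⟩
    rintro y ⟨hyi, hyapx, hysub⟩
    refine ⟨s, ⟨?_, ?_⟩, hso⟩
    · exact fun a ha => hyapx.1 (hss ha)
    · intro n hny hns m hm
      by_cases hns₀ : n ∈ s₀
      · -- n ∈ s₀ \ s ⊆ x \ s, use hsapx on x
        have hnx : n ∈ x := hxapx.1 hns₀
        exact hsapx.2 n hnx hns m hm
      · exact hyapx.2 n hny hns₀ m (hss hm)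
  · -- s₀ ⊆ s : Rej s is contradicted since o s holds
    have hvH : ↑(s \ s₀) ⊆ H := by
      intro b hb
      simp only [Finset.coe_sdiff, Set.mem_diff, Finset.mem_coe] at hb
      have hbx : (b : ℕ) ∈ x := hsapx.1 hb.1
      rcases hxsub hbx with h | h
      · exact absurd h hb.2
      · exact h
    have hRs : Rej (s₀ ∪ (s \ s₀)) := hRall _ hvH
    rw [Finset.union_sdiff_of_subset hss] at hRs
    refine hRs ⟨A, hA, le_refl A, ?_⟩
    rintro y ⟨hyi, hyapx, hysub⟩
    exact ⟨s, hyapx, hso⟩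

/-- U-Ramsey sets -/
def CRa (Y : Set (Set ℕ)) : Prop :=
  ∀ s A, A ∈ U → ∃ B ∈ U, B ⊆ A ∧ (seg s B ⊆ Y ∨ ∀ x ∈ seg s B, x ∉ Y)

/-- U-Ramsey null sets -/
def CR0 (Y : Set (Set ℕ)) : Prop :=
  ∀ s A, A ∈ U → ∃ B ∈ U, B ⊆ A ∧ ∀ x ∈ seg s B, x ∉ Y

lemma CR0.toCRa {Y : Set (Set ℕ)} (h : CR0 U Y) : CRa U Y := by
  intro s A hA
  obtain ⟨B, h1, h2, h3⟩ := h s A hA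
  exact ⟨B, h1, h2, Or.inr h3⟩

lemma CRa.compl {Y : Set (Set ℕ)} (h : CRa U Y) : CRa U Yᶜ := by
  intro s A hA
  obtain ⟨B, h1, h2, h3⟩ := h s A hA
  refine ⟨B, h1, h2, ?_⟩
  rcases h3 with h3 | h3
  · exact Or.inr fun x hx hc => hc (h3 hx)
  · exact Or.inl fun x hx => h3 x hx

lemma CRa.inter {Y Z : Set (Set ℕ)} (hY : CRa U Y) (hZ : CRa U Z) : CRa U (Y ∩ Z) := by
  intro s A hA
  obtain ⟨B, h1, h2, h3⟩ := hY s A hA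
  rcases h3 with h3 | h3
  · obtain ⟨B', h1', h2', h3'⟩ := hZ s B h1
    refine ⟨B', h1', h2'.trans h2, ?_⟩
    rcases h3' with h3' | h3'
    · exact Or.inl fun x hx => ⟨h3 (seg_mono h2' hx), h3' hx⟩
    · exact Or.inr fun x hx hc => h3' x hx hc.2
  · exact ⟨B, h1, h2, Or.inr fun x hx hc => h3 x hx hc.1⟩

/-- initial cut of `x` below `e` (inclusive) -/
noncomputable def cutS (x : Set ℕ) (e : ℕ) : Finset ℕ :=
  ((Set.finite_Iic e).inter_of_right x).toFinset

lemma mem_cutS {x : Set ℕ} {e n : ℕ} : n ∈ cutS x e ↔ n ∈ x ∧ n ≤ e := by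
  simp [cutS, Set.Finite.mem_toFinset]

/-- initial cut of `x` strictly below `e` -/
noncomputable def cutIo (x : Set ℕ) (e : ℕ) : Finset ℕ :=
  ((Set.finite_Iio e).inter_of_right x).toFinset

lemma mem_cutIo {x : Set ℕ} {e n : ℕ} : n ∈ cutIo x e ↔ n ∈ x ∧ n < e := by
  simp [cutIo, Set.Finite.mem_toFinset]

lemma apx_cutS {x : Set ℕ} {e : ℕ} : apx (cutS x e) x := by
  constructor
  · intro n hn
    exact (mem_cutS.1 hn).1
  · intro n hnx hnc m hm
    have hne : ¬n ≤ e := fun h => hnc (mem_cutS.2 ⟨hnx, h⟩)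
    have := (mem_cutS.1 hm).2
    omega

lemma s₀_subset_cutS {s₀ : Finset ℕ} {x : Set ℕ} (hapx : apx s₀ x) {e : ℕ}
    (he : e ∈ x) (hes : e ∉ s₀) : s₀ ⊆ cutS x e := by
  intro m hm
  exact mem_cutS.2 ⟨hapx.1 hm, le_of_lt (hapx.2 e he hes m hm)⟩

/-- Master-property shape used by the union lemmas -/
def MP (s₀ : Finset ℕ) (H : Set ℕ) (Bd : Finset ℕ → ℕ → Set ℕ) : Prop :=
  ∀ v : Finset ℕ, ↑v ⊆ H → ∀ a ∈ H, (∀ m ∈ v, m < a) →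
    a ∈ ⋂ w ∈ v.powerset, ⋂ k ∈ Finset.range (s₀.sup id + v.sup id + 2), Bd (s₀ ∪ w) k

lemma seg_decider {s₀ : Finset ℕ} {H x : Set ℕ} (hx : x ∈ seg s₀ H)
    {Bd : Finset ℕ → ℕ → Set ℕ} (hH : MP s₀ H Bd)
    {t : Finset ℕ} (hts : s₀ ⊆ t) (htapx : apx t x)
    {n : ℕ} (hn : n ≤ s₀.sup id + (t \ s₀).sup id + 1) :
    x ∈ seg t (Bd t n) := by
  obtain ⟨hxi, hxapx, hxsub⟩ := hx
  refine ⟨hxi, htapx, ?_⟩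
  intro a hax
  by_cases hat : a ∈ t
  · exact Set.mem_union_left _ hat
  right
  have has₀ : a ∉ s₀ := fun h => hat (hts h)
  have haH : a ∈ H := by
    rcases hxsub hax with h | h
    · exact absurd h has₀
    · exact h
  have hvH : ↑(cutIo x a \ s₀) ⊆ H := by
    intro b hb
    simp only [Finset.coe_sdiff, Set.mem_diff, Finset.mem_coe] at hb
    obtain ⟨hb1, hb2⟩ := hb
    obtain ⟨hbx, -⟩ := mem_cutIo.1 hb1
    rcases hxsub hbx with h | h
    · exact absurd h hb2
    · exact h
  have hvlt : ∀ m ∈ cutIo x a \ s₀, m < a := by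
    intro m hm
    exact (mem_cutIo.1 (Finset.mem_sdiff.1 hm).1).2
  have hmem := hH (cutIo x a \ s₀) hvH a haH hvlt
  have hw : t \ s₀ ∈ (cutIo x a \ s₀).powerset := by
    rw [Finset.mem_powerset]
    intro b hb
    obtain ⟨hbt, hbs₀⟩ := Finset.mem_sdiff.1 hb
    refine Finset.mem_sdiff.2 ⟨mem_cutIo.2 ⟨htapx.1 hbt, ?_⟩, hbs₀⟩
    exact htapx.2 a hax hat b hbt
  have hnr : n ∈ Finset.range (s₀.sup id + (cutIo x a \ s₀).sup id + 2) := by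
    rw [Finset.mem_range]
    have : (t \ s₀).sup id ≤ (cutIo x a \ s₀).sup id :=
      Finset.sup_mono (Finset.mem_powerset.1 hw)
    omega
  have := Set.mem_iInter₂.1 (Set.mem_iInter₂.1 hmem (t \ s₀) hw) n hnr
  rwa [Finset.union_sdiff_of_subset hts] at this

lemma CR0_iUnion (hfree : IsFree U) (hR : IsRamsey U) (Z : ℕ → Set (Set ℕ))
    (hZ : ∀ n, CR0 U (Z n)) : CR0 U (⋃ n, Z n) := by
  classical
  intro s₀ A hA
  have hex : ∀ t : Finset ℕ, ∀ n : ℕ, ∃ B, B ∈ U ∧ B ⊆ A ∧ ∀ x ∈ seg t B, x ∉ Z n :=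
    fun t n => by
      obtain ⟨B, h1, h2, h3⟩ := hZ n t A hA
      exact ⟨B, h1, h2, h3⟩
  choose Bd hBdU hBdA hBd using hex
  obtain ⟨H, hHU, hHA, hHm⟩ := master U hfree hR A hA
    (fun v => ⋂ w ∈ v.powerset, ⋂ k ∈ Finset.range (s₀.sup id + v.sup id + 2), Bd (s₀ ∪ w) k)
    (fun v => (Filter.biInter_finset_mem _).2 fun w _ =>
      (Filter.biInter_finset_mem _).2 fun k _ => hBdU _ k)
  refine ⟨H, hHU, hHA, ?_⟩
  intro x hx hmem
  rw [Set.mem_iUnion] at hmem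
  obtain ⟨n, hxZ⟩ := hmem
  obtain ⟨e, hex', hen⟩ := ((hx.1.diff s₀.finite_toSet).exists_gt n)
  obtain ⟨hexx, hexs⟩ := hex'
  have hts : s₀ ⊆ cutS x e := s₀_subset_cutS hx.2.1 hexx hexs
  have hnsup : n ≤ s₀.sup id + ((cutS x e) \ s₀).sup id + 1 := by
    have hec : e ∈ cutS x e \ s₀ := Finset.mem_sdiff.2 ⟨mem_cutS.2 ⟨hexx, le_rfl⟩, hexs⟩
    have := Finset.le_sup (f := id) hec
    simp only [id] at this
    omega
  have hxseg : x ∈ seg (cutS x e) (Bd (cutS x e) n) :=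
    seg_decider hx hHm hts apx_cutS hnsup
  exact hBd (cutS x e) n x hxseg hxZ

lemma CRa_iUnion (hfree : IsFree U) (hR : IsRamsey U) (Z : ℕ → Set (Set ℕ))
    (hZ : ∀ n, CRa U (Z n)) : CRa U (⋃ n, Z n) := by
  classical
  intro s₀ A hA
  have hex : ∀ t : Finset ℕ, ∀ n : ℕ, ∃ B, B ∈ U ∧ B ⊆ A ∧
      (seg t B ⊆ Z n ∨ ∀ x ∈ seg t B, x ∉ Z n) :=
    fun t n => by
      obtain ⟨B, h1, h2, h3⟩ := hZ n t A hA
      exact ⟨B, h1, h2, h3⟩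
  choose Bd hBdU hBdA hBd using hex
  obtain ⟨H, hHU, hHA, hHm⟩ := master U hfree hR A hA
    (fun v => ⋂ w ∈ v.powerset, ⋂ k ∈ Finset.range (s₀.sup id + v.sup id + 2), Bd (s₀ ∪ w) k)
    (fun v => (Filter.biInter_finset_mem _).2 fun w _ =>
      (Filter.biInter_finset_mem _).2 fun k _ => hBdU _ k)
  set o : Finset ℕ → Prop := fun t =>
    s₀ ⊆ t ∧ ∃ n, n ≤ s₀.sup id + (t \ s₀).sup id + 1 ∧ seg t (Bd t n) ⊆ Z n with ho
  have htrace : ∀ x ∈ seg s₀ H, (x ∈ ⋃ n, Z n ↔ x ∈ opn o) := by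
    intro x hx
    constructor
    · intro hmem
      rw [Set.mem_iUnion] at hmem
      obtain ⟨n, hxZ⟩ := hmem
      obtain ⟨e, hex', hen⟩ := ((hx.1.diff s₀.finite_toSet).exists_gt n)
      obtain ⟨hexx, hexs⟩ := hex'
      have hts : s₀ ⊆ cutS x e := s₀_subset_cutS hx.2.1 hexx hexs
      have hnsup : n ≤ s₀.sup id + ((cutS x e) \ s₀).sup id + 1 := by
        have hec : e ∈ cutS x e \ s₀ := Finset.mem_sdiff.2 ⟨mem_cutS.2 ⟨hexx, le_rfl⟩, hexs⟩
        have := Finset.le_sup (f := id) hec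
        simp only [id] at this
        omega
      have hxseg : x ∈ seg (cutS x e) (Bd (cutS x e) n) :=
        seg_decider hx hHm hts apx_cutS hnsup
      rcases hBd (cutS x e) n with hpos | hneg
      · exact ⟨cutS x e, apx_cutS, hts, n, hnsup, hpos⟩
      · exact absurd hxZ (hneg x hxseg)
    · rintro ⟨s, hsapx, hss₀, n, hn, hpos⟩
      have hxseg : x ∈ seg s (Bd s n) := seg_decider hx hHm hss₀ hsapx hn
      exact Set.mem_iUnion.2 ⟨n, hpos hxseg⟩
  obtain ⟨B, hBU, hBH, hB⟩ := open_dich U hfree hR o s₀ H hHU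
  refine ⟨B, hBU, hBH.trans hHA, ?_⟩
  rcases hB with hB | hB
  · left
    intro x hx
    exact (htrace x (seg_mono hBH hx)).2 (hB hx)
  · right
    intro x hx hc
    exact hB x hx ((htrace x (seg_mono hBH hx)).1 hc)

/-- the canonical "null cover" of `Y` -/
def Mset (Y : Set (Set ℕ)) : Set (Set ℕ) :=
  {x | ∃ s B, B ∈ U ∧ x ∈ seg s B ∧ ∀ y ∈ seg s B, y ∉ Y}

lemma subset_Mset_of_null {Y : Set (Set ℕ)} {s : Finset ℕ} {B : Set ℕ} (hB : B ∈ U)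
    (h : ∀ y ∈ seg s B, y ∉ Y) : seg s B ⊆ Mset U Y :=
  fun x hx => ⟨s, B, hB, hx, h⟩

lemma not_mem_Mset {Y : Set (Set ℕ)} {x : Set ℕ} (hY : x ∈ Y) : x ∉ Mset U Y := by
  rintro ⟨s, B, hB, hxs, hnull⟩
  exact hnull x hxs hY

lemma CRa_Mset (hfree : IsFree U) (hR : IsRamsey U) (Y : Set (Set ℕ)) :
    CRa U (Mset U Y) := by
  classical
  intro s₀ A hA
  by_cases hnull : ∃ B ∈ U, B ⊆ A ∧ ∀ y ∈ seg s₀ B, y ∉ Y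
  · obtain ⟨B, hBU, hBA, hB⟩ := hnull
    exact ⟨B, hBU, hBA, Or.inl (subset_Mset_of_null U hBU hB)⟩
  set Pos : Finset ℕ → Prop := fun t => ∀ B ∈ U, B ⊆ A → ∃ y ∈ seg t B, y ∈ Y with hPos
  have hPs₀ : Pos s₀ := by
    intro B hBU hBA
    by_contra hcon
    push_neg at hcon
    exact hnull ⟨B, hBU, hBA, hcon⟩
  have step : ∀ t : Finset ℕ, Pos t → {n | Pos (insert n t)} ∈ U := by
    intro t ht
    by_contra hcon
    have hS : {n | ¬Pos (insert n t)} ∈ U := Ultrafilter.compl_mem_iff_notMem.2 hcon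
    have hex : ∀ n, ∃ B, ¬Pos (insert n t) →
        B ∈ U ∧ B ⊆ A ∧ ∀ y ∈ seg (insert n t) B, y ∉ Y := by
      intro n
      by_cases h : ¬Pos (insert n t)
      · simp only [hPos, not_forall] at h
        obtain ⟨B, hBU, hBA, hB⟩ := h
        push_neg at hB
        exact ⟨B, fun _ => ⟨hBU, hBA, hB⟩⟩
      · exact ⟨Set.univ, fun hh => absurd hh h⟩
    choose Bsel hBsel using hex
    obtain ⟨B, hBU, hBS, hBstep⟩ := shrink U hfree hR t _ hS Bsel (fun n hn => (hBsel n hn).1)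
    obtain ⟨y, hyseg, hyY⟩ := ht (B ∩ A) (Filter.inter_mem hBU hA) Set.inter_subset_right
    have hy' : y ∈ seg t B := seg_mono Set.inter_subset_left hyseg
    obtain ⟨n, hnS, hnt, hyn⟩ := hBstep y hy'
    exact (hBsel n hnS).2.2 y hyn hyY
  obtain ⟨H, hHU, hHA, hHm⟩ := master U hfree hR A hA
    (fun v => if Pos (s₀ ∪ v) then {n | Pos (insert n (s₀ ∪ v))} else Set.univ)
    (fun v => by
      beta_reduce
      by_cases h : Pos (s₀ ∪ v)
      · rw [if_pos h]; exact step _ h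
      · rw [if_neg h]; exact Filter.univ_mem)
  have hPall : ∀ v : Finset ℕ, ↑v ⊆ H → Pos (s₀ ∪ v) := by
    intro v
    induction v using Finset.induction_on_max with
    | empty => intro _; simpa using hPs₀
    | insert a v ha ih =>
        intro hsub
        have hvH : ↑v ⊆ H := fun b hb => hsub (by simp [hb])
        have haH : a ∈ H := hsub (by simp)
        have := hHm v hvH a haH (fun m hm => ha m hm)
        rw [if_pos (ih hvH)] at this
        have : Pos (insert a (s₀ ∪ v)) := this
        rwa [← Finset.union_insert] at this
  refine ⟨H, hHU, hHA, Or.inr ?_⟩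
  rintro x hxseg ⟨s, B, hBU, hxsB, hnullsB⟩
  obtain ⟨hxi, hxapx, hxsub⟩ := hxseg
  have hBH : B ∩ H ∈ U := Filter.inter_mem hBU hHU
  rcases apx_total hxsB.2.1 hxapx with hss | hss
  · -- s ⊆ s₀
    have hseg : seg s₀ (B ∩ H) ⊆ seg s B := by
      rintro y ⟨hyi, hyapx, hysub⟩
      refine ⟨hyi, ⟨fun a ha => hyapx.1 (hss ha), ?_⟩, ?_⟩
      · intro n hny hns m hm
        by_cases hns₀ : n ∈ s₀
        · exact hxsB.2.1.2 n (hxapx.1 hns₀) hns m hm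
        · exact hyapx.2 n hny hns₀ m (hss hm)
      · intro a hay
        by_cases has : a ∈ s
        · exact Set.mem_union_left _ has
        right
        by_cases has₀ : a ∈ s₀
        · have hax : a ∈ x := hxapx.1 has₀
          rcases hxsB.2.2 hax with h | h
          · exact absurd h has
          · exact h
        · rcases hysub hay with h | h
          · exact absurd h has₀
          · exact h.1
    have hPos₀ : Pos s₀ := by simpa using hPall ∅ (by simp)
    obtain ⟨y, hy, hyY⟩ := hPos₀ (B ∩ H) hBH (Set.inter_subset_right.trans hHA)
    exact hnullsB y (hseg hy) hyY
  · -- s₀ ⊆ s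
    have hvH : ↑(s \ s₀) ⊆ H := by
      intro b hb
      simp only [Finset.coe_sdiff, Set.mem_diff, Finset.mem_coe] at hb
      have hbx : (b : ℕ) ∈ x := hxsB.2.1.1 hb.1
      rcases hxsub hbx with h | h
      · exact absurd h hb.2
      · exact h
    have hPoss : Pos s := by
      have := hPall _ hvH
      rwa [Finset.union_sdiff_of_subset hss] at this
    obtain ⟨y, hy, hyY⟩ := hPoss (B ∩ H) hBH (Set.inter_subset_right.trans hHA)
    exact hnullsB y (seg_mono Set.inter_subset_left hy) hyY

section Analytic

variable (g : (ℕ → ℕ) → (ℕ → Bool))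

/-- `f` extends the finite sequence `u` -/
def ExtL (u : List ℕ) (f : ℕ → ℕ) : Prop := ∀ i (h : i < u.length), f i = u.get ⟨i, h⟩

lemma ExtL_exists (u : List ℕ) : ∃ f, ExtL u f := by
  classical
  refine ⟨fun i => if h : i < u.length then u.get ⟨i, h⟩ else 0, ?_⟩
  intro i h
  simp [h]

/-- subset of ℕ associated to `g f` -/
def gs (f : ℕ → ℕ) : Set ℕ := {n | g f n = true}

def Au (u : List ℕ) : Set (Set ℕ) := {x | ∃ f, ExtL u f ∧ x = gs g f}

def Dm (u : List ℕ) : Set (Set ℕ) :=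
  {x | ∀ k : ℕ, ∃ f, ExtL u f ∧ ∀ j < k, (g f j = true ↔ j ∈ x)}

lemma Au_subset_Dm (u : List ℕ) : Au g u ⊆ Dm g u := by
  rintro x ⟨f, hf, rfl⟩
  intro k
  exact ⟨f, hf, fun j _ => Iff.rfl⟩

lemma Au_succ (u : List ℕ) : Au g u ⊆ ⋃ m, Au g (u ++ [m]) := by
  rintro x ⟨f, hf, rfl⟩
  refine Set.mem_iUnion.2 ⟨f u.length, f, ?_, rfl⟩
  intro i h
  rw [List.length_append, List.length_singleton] at h
  by_cases hi : i < u.length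
  · rw [hf i hi]
    simp only [List.get_eq_getElem]
    rw [List.getElem_append_left hi]
  · have : i = u.length := by omega
    subst this
    simp

/-- the open code for the complement of `Dm g u` -/
def oD (u : List ℕ) : Finset ℕ → Prop := fun s =>
  ∃ k, k ≤ s.sup id + 1 ∧ (s = ∅ → k = 0) ∧
    ∀ f, ExtL u f → ¬ (∀ j < k, (g f j = true ↔ j ∈ (↑s : Set ℕ)))

lemma Dm_trace (u : List ℕ) {x : Set ℕ} (hx : x.Infinite) :
    x ∈ Dm g u ↔ x ∉ opn (oD g u) := by
  constructor
  · rintro hD ⟨s, hapx, k, hk, hke, hbad⟩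
    obtain ⟨f, hf, hagree⟩ := hD k
    refine hbad f hf ?_
    intro j hj
    rw [hagree j hj]
    rcases Finset.eq_empty_or_nonempty s with rfl | hne
    · rw [hke rfl] at hj; omega
    · obtain ⟨msup, hmsup, hsupeq⟩ := Finset.exists_mem_eq_sup s hne id
      constructor
      · intro hjx
        by_contra hjs
        have h1 := hapx.2 j hjx hjs msup hmsup
        have hjle : j ≤ s.sup id := by omega
        rw [hsupeq] at hjle
        simp only [id] at hjle h1
        omega
      · intro hjs
        exact hapx.1 hjs
  · intro hno k
    by_contra hcon
    rcases Nat.eq_zero_or_pos k with rfl | hkpos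
    · obtain ⟨f, hf⟩ := ExtL_exists u
      exact hcon ⟨f, hf, fun j hj => absurd hj (by omega)⟩
    · obtain ⟨e, heB, hek⟩ := hx.exists_gt k
      have hec : e ∈ cutS x e := mem_cutS.2 ⟨heB, le_rfl⟩
      refine hno ⟨cutS x e, apx_cutS, k, ?_, ?_, ?_⟩
      · have := Finset.le_sup (f := id) hec
        simp only [id] at this
        omega
      · intro hemp
        rw [hemp] at hec
        simp at hec
      · intro f hf hagree_s
        refine hcon ⟨f, hf, ?_⟩
        intro j hj
        rw [hagree_s j hj]
        simp only [Finset.coe_sort_coe, Finset.mem_coe, mem_cutS]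
        constructor
        · rintro ⟨h1, -⟩; exact h1
        · intro hjx; exact ⟨hjx, by omega⟩

lemma CRa_Dm (hfree : IsFree U) (hR : IsRamsey U) (u : List ℕ) : CRa U (Dm g u) := by
  intro s A hA
  obtain ⟨B, hBU, hBA, hB⟩ := open_dich U hfree hR (oD g u) s A hA
  refine ⟨B, hBU, hBA, ?_⟩
  rcases hB with hB | hB
  · exact Or.inr fun x hx hc => ((Dm_trace g u hx.1).1 hc) (hB hx)
  · exact Or.inl fun x hx => (Dm_trace g u hx.1).2 (hB x hx)

def Hu (u : List ℕ) : Set (Set ℕ) := (Mset U (Au g u))ᶜ ∩ Dm g u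

lemma Au_subset_Hu (u : List ℕ) : Au g u ⊆ Hu U g u :=
  fun x hx => ⟨not_mem_Mset U hx, Au_subset_Dm g u hx⟩

lemma CRa_Hu (hfree : IsFree U) (hR : IsRamsey U) (u : List ℕ) : CRa U (Hu U g u) :=
  CRa.inter U ((CRa_Mset U hfree hR (Au g u)).compl U) (CRa_Dm U g hfree hR u)

def Ru (u : List ℕ) : Set (Set ℕ) := Hu U g u \ ⋃ m, Hu U g (u ++ [m])

lemma CR0_Ru (hfree : IsFree U) (hR : IsRamsey U) (u : List ℕ) : CR0 U (Ru U g u) := by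
  intro s A hA
  obtain ⟨B₁, hB₁U, hB₁A, hB₁⟩ :=
    CRa_iUnion U hfree hR (fun m => Hu U g (u ++ [m])) (fun m => CRa_Hu U g hfree hR _) s A hA
  rcases hB₁ with hB₁ | hB₁
  · exact ⟨B₁, hB₁U, hB₁A, fun x hx hc => hc.2 (hB₁ hx)⟩
  · obtain ⟨B₂, hB₂U, hB₂B₁, hB₂⟩ := CRa_Hu U g hfree hR u s B₁ hB₁U
    rcases hB₂ with hB₂ | hB₂
    · -- impossible
      exfalso
      have hAu : ∀ x ∈ seg s B₂, x ∉ Au g u := by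
        intro x hx hc
        have h1 : x ∈ ⋃ m, Au g (u ++ [m]) := Au_succ g u hc
        obtain ⟨m, hm⟩ := Set.mem_iUnion.1 h1
        have h2 : x ∈ ⋃ m, Hu U g (u ++ [m]) := Set.mem_iUnion.2 ⟨m, Au_subset_Hu U g _ hm⟩
        exact hB₁ x (seg_mono hB₂B₁ hx) h2
      have hsub : seg s B₂ ⊆ Mset U (Au g u) := subset_Mset_of_null U hB₂U hAu
      obtain ⟨y, hy⟩ := seg_nonempty (s := s) (mem_infinite U hfree hB₂U)
      exact (hB₂ hy).1 (hsub hy)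
    · exact ⟨B₂, hB₂U, hB₂B₁.trans hB₁A, fun x hx hc => hB₂ x hx hc.1⟩

lemma limit_lemma (hg : Continuous g) (f : ℕ → ℕ) (x : Set ℕ)
    (h : ∀ n : ℕ, ∃ fn, (∀ i < n, fn i = f i) ∧ ∀ j < n, (g fn j = true ↔ j ∈ x)) :
    gs g f = x := by
  classical
  choose fn hfn hagree using h
  have hT : Filter.Tendsto fn Filter.atTop (nhds f) := by
    rw [tendsto_pi_nhds]
    intro i
    have hev : ∀ᶠ n in Filter.atTop, fn n i = f i :=
      Filter.eventually_atTop.2 ⟨i + 1, fun n hn => hfn n i (by omega)⟩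
    exact Filter.Tendsto.congr' (hev.mono fun n hni => hni.symm) tendsto_const_nhds
  have hT2 : Filter.Tendsto (fun n => g (fn n)) Filter.atTop (nhds (g f)) :=
    (hg.tendsto f).comp hT
  ext j
  have hT3 : Filter.Tendsto (fun n => g (fn n) j) Filter.atTop (nhds (g f j)) :=
    (tendsto_pi_nhds.1 hT2) j
  set b : Bool := if j ∈ x then true else false with hb
  have hev : ∀ᶠ n in Filter.atTop, g (fn n) j = b := by
    refine Filter.eventually_atTop.2 ⟨j + 1, fun n hn => ?_⟩
    by_cases hj : j ∈ x
    · simp only [hb, if_pos hj]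
      exact (hagree n j (by omega)).2 hj
    · simp only [hb, if_neg hj]
      by_contra hc
      have : g (fn n) j = true := by
        cases hgn : g (fn n) j
        · exact absurd hgn hc
        · rfl
      exact hj ((hagree n j (by omega)).1 this)
  have hT4 : Filter.Tendsto (fun n => g (fn n) j) Filter.atTop (nhds b) :=
    Filter.Tendsto.congr' (hev.mono fun n hni => hni.symm) tendsto_const_nhds
  have hbeq : g f j = b := tendsto_nhds_unique hT3 hT4
  show g f j = true ↔ j ∈ x
  rw [hbeq]
  by_cases hj : j ∈ x <;> simp [hb, hj]

lemma exists_seg_decide (hfree : IsFree U) (hR : IsRamsey U) (hg : Continuous g) :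
    ∃ B ∈ U, (∀ x ∈ seg (∅ : Finset ℕ) B, ∃ f, x = gs g f) ∨
      (∀ x ∈ seg (∅ : Finset ℕ) B, ¬ ∃ f, x = gs g f) := by
  classical
  set N : Set (Set ℕ) := ⋃ n : ℕ, Ru U g (Denumerable.ofNat (List ℕ) n) with hN
  have hNCR0 : CR0 U N := CR0_iUnion U hfree hR _ (fun n => CR0_Ru U g hfree hR _)
  obtain ⟨B₁, hB₁U, hB₁A, hB₁⟩ := CRa_Hu U g hfree hR [] ∅ Set.univ Filter.univ_mem
  rcases hB₁ with hB₁ | hB₁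
  · -- positive side
    obtain ⟨B₂, hB₂U, hB₂B₁, hB₂⟩ := hNCR0 ∅ B₁ hB₁U
    refine ⟨B₂, hB₂U, Or.inl ?_⟩
    intro x hx
    have hxH : x ∈ Hu U g [] := hB₁ (seg_mono hB₂B₁ hx)
    have hxN : x ∉ N := hB₂ x hx
    -- recursion
    have hstep : ∀ u : List ℕ, x ∈ Hu U g u → ∃ m, x ∈ Hu U g (u ++ [m]) := by
      intro u hu
      by_contra hcon
      push_neg at hcon
      have hxR : x ∈ Ru U g u := ⟨hu, fun hc => by
        obtain ⟨m, hm⟩ := Set.mem_iUnion.1 hc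
        exact hcon m hm⟩
      refine hxN (Set.mem_iUnion.2 ⟨Encodable.encode u, ?_⟩)
      rwa [Denumerable.ofNat_encode]
    choose stp hstp using hstep
    let L : ℕ → {v : List ℕ // x ∈ Hu U g v} := fun n =>
      Nat.rec ⟨[], hxH⟩ (fun _ p => ⟨p.1 ++ [stp p.1 p.2], hstp p.1 p.2⟩) n
    have hLsucc : ∀ n, (L (n + 1)).1 = (L n).1 ++ [stp (L n).1 (L n).2] := fun n => rfl
    have hlen : ∀ n, (L n).1.length = n := by
      intro n
      induction n with
      | zero => rfl
      | succ n ih => rw [hLsucc, List.length_append, List.length_singleton, ih]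
    have hpre : ∀ a b, a ≤ b → (L a).1 <+: (L b).1 := by
      intro a b hab
      induction b with
      | zero =>
          have : a = 0 := by omega
          subst this; exact List.prefix_refl _
      | succ b ih =>
          rcases Nat.eq_or_lt_of_le hab with rfl | hlt
          · exact List.prefix_refl _
          · refine (ih (by omega)).trans ?_
            rw [hLsucc]
            exact List.prefix_append _ _
    set f : ℕ → ℕ := fun i => (L (i + 1)).1.getD i 0 with hf
    have hgetD : ∀ n i, i < n → (L n).1.getD i 0 = f i := by
      intro n i hin
      obtain ⟨t, ht⟩ := hpre (i + 1) n (by omega)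
      rw [hf]
      simp only
      have hilt : i < (L (i + 1)).1.length := by have h1 := hlen (i + 1); omega
      rw [← ht, List.getD_append _ t 0 i hilt]
    have hx_eq : gs g f = x := by
      apply limit_lemma g hg
      intro n
      have hDm : x ∈ Dm g (L n).1 := (L n).2.2
      obtain ⟨fn, hfn, hagree⟩ := hDm n
      refine ⟨fn, ?_, hagree⟩
      intro i hin
      have hilen : i < (L n).1.length := by rw [hlen]; exact hin
      rw [hfn i hilen, ← hgetD n i hin, List.get_eq_getElem,
        List.getD_eq_getElem (L n).1 0 hilen]
    exact ⟨f, hx_eq.symm⟩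
  · -- negative side
    refine ⟨B₁, hB₁U, Or.inr ?_⟩
    rintro x hx ⟨f, rfl⟩
    have : gs g f ∈ Au g [] := ⟨f, fun i h => absurd h (by simp), rfl⟩
    exact hB₁ (gs g f) hx (Au_subset_Hu U g [] this)

end Analytic

lemma toSet_inj {a b : ℕ → Bool} (h : toSet a = toSet b) : a = b := by
  funext n
  have hn : a n = true ↔ b n = true := by
    constructor
    · intro ha
      have : n ∈ toSet a := ha
      rw [h] at this
      exact this
    · intro hb
      have : n ∈ toSet b := hb
      rw [← h] at this
      exact this
  cases ha : a n <;> cases hb : b n <;> simp_all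

lemma exists_split {B : Set ℕ} (hB : B.Infinite) :
    ∃ y z : Set ℕ, y ⊆ B ∧ z ⊆ B ∧ y.Infinite ∧ z.Infinite ∧ Disjoint y z := by
  have hBp : {n | n ∈ B}.Infinite := hB
  refine ⟨Set.range (fun k => Nat.nth (· ∈ B) (2 * k)),
    Set.range (fun k => Nat.nth (· ∈ B) (2 * k + 1)), ?_, ?_, ?_, ?_, ?_⟩
  · rintro n ⟨k, rfl⟩
    exact Nat.nth_mem_of_infinite hBp _
  · rintro n ⟨k, rfl⟩
    exact Nat.nth_mem_of_infinite hBp _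
  · apply Set.infinite_range_of_injective
    intro a b hab
    have := Nat.nth_injective hBp hab
    omega
  · apply Set.infinite_range_of_injective
    intro a b hab
    have := Nat.nth_injective hBp hab
    omega
  · rw [Set.disjoint_left]
    rintro n ⟨k, rfl⟩ ⟨j, hj⟩
    have := Nat.nth_injective hBp hj
    omega

end NCB

/-- There is no coanalytic base for a Ramsey ultrafilter. -/
theorem no_coanalytic_ramsey_base (U : Ultrafilter ℕ) (hfree : IsFree U)
    (hRamsey : IsRamsey U) (X : Set (ℕ → Bool)) (hbase : IsBase X U) :
    ¬ MeasureTheory.AnalyticSet Xᶜ := by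
  classical
  intro han
  rw [MeasureTheory.AnalyticSet] at han
  rcases han with hemp | ⟨g, hg, hrange⟩
  · -- Xᶜ = ∅ : then the empty set would be in U
    have hmem : (fun _ => false : ℕ → Bool) ∈ X := by
      by_contra h
      have : (fun _ => false : ℕ → Bool) ∈ Xᶜ := h
      rw [hemp] at this
      exact this
    have h0 := hbase.1 _ hmem
    have hempty : toSet (fun _ => false : ℕ → Bool) = ∅ := by
      ext n; simp [toSet]
    rw [hempty] at h0
    exact Filter.empty_notMem (U : Filter ℕ) h0
  · obtain ⟨B, hBU, hB⟩ := NCB.exists_seg_decide U g hfree hRamsey hg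
    have hBinf : B.Infinite := NCB.mem_infinite U hfree hBU
    rcases hB with hB | hB
    · -- every subset of B is in the range of gs, contradicting the base property
      obtain ⟨b, hbX, hbsub⟩ := hbase.2 B hBU
      have hbU : toSet b ∈ U := hbase.1 b hbX
      have hbseg : toSet b ∈ NCB.seg (∅ : Finset ℕ) B := by
        refine ⟨NCB.mem_infinite U hfree hbU, ⟨by simp, fun n _ _ m hm => absurd hm (by simp)⟩, ?_⟩
        intro n hn
        exact Set.mem_union_right _ (hbsub hn)
      obtain ⟨f, hf⟩ := hB _ hbseg
      have hgf : g f ∈ Xᶜ := by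
        rw [← hrange]
        exact Set.mem_range_self f
      have hbeq : b = g f := by
        apply NCB.toSet_inj
        rw [hf]
        rfl
      rw [hbeq] at hbX
      exact hgf hbX
    · -- no subset of B is in the range: find a non-U infinite subset of B
      obtain ⟨y, z, hyB, hzB, hyI, hzI, hdisj⟩ := NCB.exists_split hBinf
      have hkey : ∀ w : Set ℕ, w ⊆ B → w.Infinite → w ∉ U → False := by
        intro w hwB hwI hwU
        -- χ_w is in Xᶜ = range g, hence w = gs g f for some f
        have hchi : (fun n => if n ∈ w then true else false : ℕ → Bool) ∈ Xᶜ := by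
          intro hmem
          have := hbase.1 _ hmem
          have heq : toSet (fun n => if n ∈ w then true else false : ℕ → Bool) = w := by
            ext n; by_cases h : n ∈ w <;> simp [toSet, h]
          rw [heq] at this
          exact hwU this
        rw [← hrange] at hchi
        obtain ⟨f, hfeq⟩ := hchi
        have hweq : w = NCB.gs g f := by
          ext n
          rw [NCB.gs]
          simp only [Set.mem_setOf_eq]
          rw [hfeq]
          by_cases h : n ∈ w <;> simp [h]
        have hwseg : w ∈ NCB.seg (∅ : Finset ℕ) B := by
          refine ⟨hwI, ⟨by simp, fun n _ _ m hm => absurd hm (by simp)⟩, ?_⟩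
          intro n hn
          exact Set.mem_union_right _ (hwB hn)
        exact hB w hwseg ⟨f, hweq⟩
      by_cases hyU : y ∈ U
      · have hzU : z ∉ U := by
          intro hzU
          have : y ∩ z ∈ U := Filter.inter_mem hyU hzU
          rw [Set.disjoint_iff_inter_eq_empty.1 hdisj] at this
          exact Filter.empty_notMem (U : Filter ℕ) this
        exact hkey z hzB hzI hzU
      · exact hkey y hyB hyI hyU
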